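/- arXiv:2102.04653 — 6 statements merged into one kernel-verified Lean document; each statement's English description precedes it below -/
import Mathlib

section
/- Let f: ℝ^m × ℝ^n → ℝ be L-smooth (its gradient is L-Lipschitz) and suppose f(x,·) is μ-strongly concave for every x. Let Y ⊆ ℝ^n be convex and h: ℝ^n → ℝ be convex, and define y*(x) as the unique maximizer over Y of y ↦ f(x,y) − h(y). Then the map x ↦ y*(x) is κ-Lipschitz continuous, where κ = L/μ. -/
open Real Filter Topology

private lemma combo_norm_sq {E : Type*} [NormedAddCommGroup E] [InnerProductSpace ℝ E]
    (a b : E) (t : ℝ) :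
    ‖t • a + (1 - t) • b‖ ^ 2
      = t * ‖a‖ ^ 2 + (1 - t) * ‖b‖ ^ 2 - t * (1 - t) * ‖a - b‖ ^ 2 := by
  rw [norm_add_sq_real, norm_sub_sq_real, norm_smul, norm_smul,
    real_inner_smul_left, real_inner_smul_right, mul_pow, mul_pow,
    Real.norm_eq_abs, Real.norm_eq_abs, sq_abs, sq_abs]
  ring

private lemma le_zero_of_forall_Ioo {a b : ℝ} (h : ∀ t ∈ Set.Ioo (0:ℝ) 1, a ≤ t * b) :
    a ≤ 0 := by
  rcases le_or_gt a 0 with h0 | h0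
  · exact h0
  · rcases le_or_gt b 0 with hb | hb
    · have := h (1/2) ⟨by norm_num, by norm_num⟩
      nlinarith
    · set t := min (1/2) (a / (2 * b)) with ht
      have htpos : 0 < t := lt_min (by norm_num) (div_pos h0 (by linarith))
      have ht1 : t < 1 := lt_of_le_of_lt (min_le_left _ _) (by norm_num)
      have h1 := h t ⟨htpos, ht1⟩
      have h2 : t * b ≤ a / 2 := by
        have hle : t ≤ a / (2 * b) := min_le_right _ _
        calc t * b ≤ (a / (2 * b)) * b := mul_le_mul_of_nonneg_right hle hb.le
          _ = a / 2 := by field_simp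
      linarith

/-- If `f` is `L`-smooth (its total gradient is `L`-Lipschitz), `f (x, ·)` is
`μ`-strongly concave for every `x`, `Y` is a nonempty compact convex set, `h` is convex and
`ystar x` is the (unique) maximizer of `y ↦ f (x, y) - h y` over `Y`, then `ystar` is
`κ = L/μ`-Lipschitz. -/
theorem ystar_lipschitz (m n : ℕ) (L μ : ℝ) (hL : 0 ≤ L) (hμ : 0 < μ)
    (f : (EuclideanSpace ℝ (Fin m)) × (EuclideanSpace ℝ (Fin n)) → ℝ)
    (Y : Set (EuclideanSpace ℝ (Fin n))) (hYne : Y.Nonempty)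
    (hYconv : Convex ℝ Y) (hYcpt : IsCompact Y)
    (h : EuclideanSpace ℝ (Fin n) → ℝ) (hconv : ConvexOn ℝ Set.univ h)
    (hdiff : Differentiable ℝ f)
    (hsmooth : LipschitzWith L.toNNReal (fderiv ℝ f))
    (hconc : ∀ x, ConcaveOn ℝ Y (fun y => f (x, y) + (μ / 2) * ‖y‖ ^ 2))
    (ystar : EuclideanSpace ℝ (Fin m) → EuclideanSpace ℝ (Fin n))
    (hmem : ∀ x, ystar x ∈ Y)
    (hmax : ∀ x, ∀ y ∈ Y, f (x, y) - h y ≤ f (x, ystar x) - h (ystar x)) :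
    LipschitzWith (L / μ).toNNReal ystar := by
  -- Key quadratic-growth inequality at the maximizer.
  have key : ∀ x, ∀ y ∈ Y,
      (f (x, y) - h y) + (μ / 2) * ‖y - ystar x‖ ^ 2 ≤ f (x, ystar x) - h (ystar x) := by
    intro x y hy
    have hysY := hmem x
    have main : ∀ t ∈ Set.Ioo (0:ℝ) 1,
        ((f (x, y) - h y) + (μ / 2) * ‖y - ystar x‖ ^ 2 - (f (x, ystar x) - h (ystar x)))
          ≤ t * ((μ / 2) * ‖y - ystar x‖ ^ 2) := by
      intro t ht
      obtain ⟨ht0, ht1⟩ := ht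
      have ht1' : (0:ℝ) ≤ 1 - t := by linarith
      have hytY : t • y + (1 - t) • ystar x ∈ Y := hYconv hy hysY ht0.le ht1' (by ring)
      have hg := (hconc x).2 hy hysY ht0.le ht1' (by ring)
      have hhc := hconv.2 (Set.mem_univ y) (Set.mem_univ (ystar x)) ht0.le ht1' (by ring)
      have hm := hmax x _ hytY
      have hn := combo_norm_sq y (ystar x) t
      simp only [smul_eq_mul] at hg hhc
      have hcomb : t * ((f (x, y) - h y) + (μ / 2) * (1 - t) * ‖y - ystar x‖ ^ 2
          - (f (x, ystar x) - h (ystar x))) ≤ 0 := by nlinarith [hg, hhc, hm, hn]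
      have hc : (f (x, y) - h y) + (μ / 2) * (1 - t) * ‖y - ystar x‖ ^ 2
          - (f (x, ystar x) - h (ystar x)) ≤ 0 := by
        nlinarith [hcomb, ht0]
      nlinarith [hc]
    have := le_zero_of_forall_Ioo main
    linarith
  -- Lipschitz bound via mean value inequality.
  have hLμ : (0:ℝ) ≤ L / μ := div_nonneg hL hμ.le
  apply LipschitzWith.of_dist_le_mul
  intro x1 x2
  rw [Real.coe_toNNReal _ hLμ, dist_eq_norm, dist_eq_norm]
  set y1 := ystar x1
  set y2 := ystar x2
  set F : EuclideanSpace ℝ (Fin n) → ℝ := fun y => f (x1, y) - f (x2, y) with hF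
  set F' : EuclideanSpace ℝ (Fin n) → (EuclideanSpace ℝ (Fin n) →L[ℝ] ℝ) := fun y =>
    (fderiv ℝ f (x1, y) - fderiv ℝ f (x2, y)).comp
      (ContinuousLinearMap.inr ℝ (EuclideanSpace ℝ (Fin m)) (EuclideanSpace ℝ (Fin n))) with hF'
  have hder : ∀ y, HasFDerivAt F (F' y) y := by
    intro y
    have h1 : HasFDerivAt (fun y => f (x1, y))
        ((fderiv ℝ f (x1, y)).comp (ContinuousLinearMap.inr ℝ _ _)) y :=
      (hdiff (x1, y)).hasFDerivAt.comp y (hasFDerivAt_prodMk_right x1 y)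
    have h2 : HasFDerivAt (fun y => f (x2, y))
        ((fderiv ℝ f (x2, y)).comp (ContinuousLinearMap.inr ℝ _ _)) y :=
      (hdiff (x2, y)).hasFDerivAt.comp y (hasFDerivAt_prodMk_right x2 y)
    have := h1.sub h2
    exact this
  have hbound : ∀ y, ‖F' y‖ ≤ L * ‖x1 - x2‖ := by
    intro y
    have hlip : ‖fderiv ℝ f (x1, y) - fderiv ℝ f (x2, y)‖ ≤ L * ‖x1 - x2‖ := by
      have := hsmooth.dist_le_mul (x1, y) (x2, y)
      rw [dist_eq_norm, dist_eq_norm] at this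
      have hnorm : ‖((x1, y) : (EuclideanSpace ℝ (Fin m)) × (EuclideanSpace ℝ (Fin n))) - (x2, y)‖
          = ‖x1 - x2‖ := by
        simp [Prod.norm_def]
      rw [hnorm] at this
      calc ‖fderiv ℝ f (x1, y) - fderiv ℝ f (x2, y)‖ ≤ ↑L.toNNReal * ‖x1 - x2‖ := this
        _ = L * ‖x1 - x2‖ := by rw [Real.coe_toNNReal _ hL]
    apply ContinuousLinearMap.opNorm_le_bound _ (by positivity)
    intro v
    calc ‖F' y v‖
        = ‖(fderiv ℝ f (x1, y) - fderiv ℝ f (x2, y)) ((0, v) :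
            (EuclideanSpace ℝ (Fin m)) × (EuclideanSpace ℝ (Fin n)))‖ := rfl
      _ ≤ ‖fderiv ℝ f (x1, y) - fderiv ℝ f (x2, y)‖ * ‖((0, v) :
            (EuclideanSpace ℝ (Fin m)) × (EuclideanSpace ℝ (Fin n)))‖ :=
          ContinuousLinearMap.le_opNorm _ _
      _ = ‖fderiv ℝ f (x1, y) - fderiv ℝ f (x2, y)‖ * ‖v‖ := by
          simp [Prod.norm_def]
      _ ≤ (L * ‖x1 - x2‖) * ‖v‖ := mul_le_mul_of_nonneg_right hlip (norm_nonneg v)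
  have hMVT : ‖F y1 - F y2‖ ≤ (L * ‖x1 - x2‖) * ‖y1 - y2‖ := by
    have := convex_univ.norm_image_sub_le_of_norm_hasFDerivWithin_le
      (f := F) (f' := F') (C := L * ‖x1 - x2‖)
      (fun y _ => (hder y).hasFDerivWithinAt) (fun y _ => hbound y)
      (Set.mem_univ y2) (Set.mem_univ y1)
    simpa using this
  have k1 := key x1 y2 (hmem x2)
  have k2 := key x2 y1 (hmem x1)
  rw [norm_sub_rev y2 y1] at k1
  have hsum : μ * ‖y1 - y2‖ ^ 2 ≤ F y1 - F y2 := by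
    simp only [hF]
    linarith
  have habs : F y1 - F y2 ≤ ‖F y1 - F y2‖ := by
    rw [Real.norm_eq_abs]; exact le_abs_self _
  have hfin : μ * ‖y1 - y2‖ ^ 2 ≤ (L * ‖x1 - x2‖) * ‖y1 - y2‖ := by linarith
  rcases eq_or_lt_of_le (norm_nonneg (y1 - y2)) with hd | hd
  · rw [← hd]
    positivity
  · rw [div_mul_eq_mul_div, le_div_iff₀ hμ]
    have h2 : (μ * ‖y1 - y2‖) * ‖y1 - y2‖ ≤ (L * ‖x1 - x2‖) * ‖y1 - y2‖ := by
      calc (μ * ‖y1 - y2‖) * ‖y1 - y2‖ = μ * ‖y1 - y2‖ ^ 2 := by ring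
        _ ≤ (L * ‖x1 - x2‖) * ‖y1 - y2‖ := hfin
    have h3 := le_of_mul_le_mul_right h2 hd
    linarith
end

section
/- Under the same assumptions (f L-smooth, f(x,·) μ-strongly concave, h convex, Y compact convex), the function Φ(x) = max_{y∈Y} (f(x,y) − h(y)) is differentiable with ∇Φ(x) = ∇₁f(x, y*(x)), and ∇Φ is L(1+κ)-Lipschitz, where κ = L/μ and ∇₁ denotes the gradient in the first argument. -/
open Real Filter Topology



section aux

variable {G : Type*} [NormedAddCommGroup G] [NormedSpace ℝ G]

lemma line_hasDerivAt (p v : G) (t : ℝ) : HasDerivAt (fun s : ℝ => p + s • v) v t := by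
  simpa using ((hasDerivAt_id t).smul_const v).const_add p

lemma taylor_bound {f : G → ℝ} {L : ℝ} (hL : 0 ≤ L)
    (hdiff : Differentiable ℝ f) (hlip : LipschitzWith L.toNNReal (fderiv ℝ f))
    (p q : G) : |f q - f p - fderiv ℝ f p (q - p)| ≤ L * ‖q - p‖ ^ 2 := by
  set v := q - p with hv
  set g : ℝ → ℝ := fun t => f (p + t • v) - t * (fderiv ℝ f p v) with hg
  have hder : ∀ t ∈ Set.Icc (0:ℝ) 1, HasDerivWithinAt g
      ((fderiv ℝ f (p + t • v) - fderiv ℝ f p) v) (Set.Icc 0 1) t := by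
    intro t ht
    have h1 : HasDerivAt (fun s : ℝ => f (p + s • v)) (fderiv ℝ f (p + t • v) v) t :=
      (hdiff (p + t • v)).hasFDerivAt.comp_hasDerivAt t (line_hasDerivAt p v t)
    have h2 : HasDerivAt (fun s : ℝ => s * (fderiv ℝ f p v)) (fderiv ℝ f p v) t := by
      simpa using (hasDerivAt_id t).mul_const (fderiv ℝ f p v)
    exact ((h1.sub h2).congr_deriv (by simp)).hasDerivWithinAt
  have bound : ∀ t ∈ Set.Ico (0:ℝ) 1,
      ‖(fderiv ℝ f (p + t • v) - fderiv ℝ f p) v‖ ≤ L * ‖v‖ ^ 2 := by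
    intro t ht
    have h1 : ‖fderiv ℝ f (p + t • v) - fderiv ℝ f p‖ ≤ L * ‖v‖ := by
      have := hlip.dist_le_mul (p + t • v) p
      rw [dist_eq_norm, dist_eq_norm] at this
      have h2 : ‖p + t • v - p‖ = |t| * ‖v‖ := by
        simp [norm_smul, abs_of_nonneg ht.1]
      calc ‖fderiv ℝ f (p + t • v) - fderiv ℝ f p‖ ≤ L.toNNReal * ‖p + t • v - p‖ := this
        _ = L * (|t| * ‖v‖) := by rw [h2, Real.coe_toNNReal _ hL]
        _ ≤ L * (1 * ‖v‖) := by
            apply mul_le_mul_of_nonneg_left _ hL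
            apply mul_le_mul_of_nonneg_right _ (norm_nonneg v)
            rw [abs_of_nonneg ht.1]; exact ht.2.le
        _ = L * ‖v‖ := by ring_nf
    calc ‖(fderiv ℝ f (p + t • v) - fderiv ℝ f p) v‖
        ≤ ‖fderiv ℝ f (p + t • v) - fderiv ℝ f p‖ * ‖v‖ :=
          ContinuousLinearMap.le_opNorm _ _
      _ ≤ (L * ‖v‖) * ‖v‖ := mul_le_mul_of_nonneg_right h1 (norm_nonneg v)
      _ = L * ‖v‖ ^ 2 := by ring
  have := norm_image_sub_le_of_norm_deriv_le_segment' hder bound 1 (Set.right_mem_Icc.2 zero_le_one)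
  have hg1 : g 1 = f q - fderiv ℝ f p v := by simp [hg, hv]
  have hg0 : g 0 = f p := by simp [hg]
  rw [hg1, hg0] at this
  simpa [Real.norm_eq_abs, abs_sub_comm, sub_right_comm] using this

end aux


section aux2

variable {E F : Type*} [NormedAddCommGroup E] [NormedSpace ℝ E]
  [NormedAddCommGroup F] [NormedSpace ℝ F]

lemma line_hasDerivAt' (p v : E) (t : ℝ) : HasDerivAt (fun s : ℝ => p + s • v) v t := by
  simpa using ((hasDerivAt_id t).smul_const v).const_add p

lemma cross_bound {f : E × F → ℝ} {L : ℝ} (hL : 0 ≤ L)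
    (hdiff : Differentiable ℝ f) (hlip : LipschitzWith L.toNNReal (fderiv ℝ f))
    (x₁ x₂ : E) (y₁ y₂ : F) :
    |(f (x₁, y₁) - f (x₂, y₁)) - (f (x₁, y₂) - f (x₂, y₂))| ≤ L * ‖y₁ - y₂‖ * ‖x₁ - x₂‖ := by
  set d := x₁ - x₂ with hd
  set g : ℝ → ℝ := fun t => f (x₂ + t • d, y₁) - f (x₂ + t • d, y₂) with hg
  have hcurve : ∀ (y : F) (t : ℝ), HasDerivAt (fun s : ℝ => f (x₂ + s • d, y))
      (fderiv ℝ f (x₂ + t • d, y) (d, 0)) t := by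
    intro y t
    have h1 : HasDerivAt (fun s : ℝ => ((x₂ + s • d : E), y)) ((d, 0) : E × F) t :=
      ((line_hasDerivAt' x₂ d t).prodMk (hasDerivAt_const t y))
    exact (hdiff _).hasFDerivAt.comp_hasDerivAt t h1
  have hder : ∀ t ∈ Set.Icc (0:ℝ) 1, HasDerivWithinAt g
      ((fderiv ℝ f (x₂ + t • d, y₁) - fderiv ℝ f (x₂ + t • d, y₂)) (d, 0))
      (Set.Icc 0 1) t := by
    intro t ht
    exact (((hcurve y₁ t).sub (hcurve y₂ t)).congr_deriv (by simp)).hasDerivWithinAt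
  have bound : ∀ t ∈ Set.Ico (0:ℝ) 1,
      ‖(fderiv ℝ f (x₂ + t • d, y₁) - fderiv ℝ f (x₂ + t • d, y₂)) (d, 0)‖
        ≤ L * ‖y₁ - y₂‖ * ‖d‖ := by
    intro t ht
    have h1 : ‖fderiv ℝ f (x₂ + t • d, y₁) - fderiv ℝ f (x₂ + t • d, y₂)‖ ≤ L * ‖y₁ - y₂‖ := by
      have := hlip.dist_le_mul (x₂ + t • d, y₁) (x₂ + t • d, y₂)
      rw [dist_eq_norm, dist_eq_norm] at this
      have h2 : ‖((x₂ + t • d, y₁) : E × F) - (x₂ + t • d, y₂)‖ = ‖y₁ - y₂‖ := by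
        simp [Prod.norm_def]
      rw [h2, Real.coe_toNNReal _ hL] at this
      exact this
    have h3 : ‖((d, 0) : E × F)‖ = ‖d‖ := by simp [Prod.norm_def]
    calc ‖(fderiv ℝ f (x₂ + t • d, y₁) - fderiv ℝ f (x₂ + t • d, y₂)) (d, 0)‖
        ≤ ‖fderiv ℝ f (x₂ + t • d, y₁) - fderiv ℝ f (x₂ + t • d, y₂)‖ * ‖((d, 0) : E × F)‖ :=
          ContinuousLinearMap.le_opNorm _ _
      _ ≤ (L * ‖y₁ - y₂‖) * ‖d‖ := by
          rw [h3]; exact mul_le_mul_of_nonneg_right h1 (norm_nonneg d)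
      _ = L * ‖y₁ - y₂‖ * ‖d‖ := by ring
  have := norm_image_sub_le_of_norm_deriv_le_segment' hder bound 1 (Set.right_mem_Icc.2 zero_le_one)
  have hg1 : g 1 = f (x₁, y₁) - f (x₁, y₂) := by simp [hg, hd]
  have hg0 : g 0 = f (x₂, y₁) - f (x₂, y₂) := by simp [hg]
  rw [hg1, hg0, sub_zero, mul_one, Real.norm_eq_abs] at this
  have heq : f (x₁, y₁) - f (x₂, y₁) - (f (x₁, y₂) - f (x₂, y₂))
      = f (x₁, y₁) - f (x₁, y₂) - (f (x₂, y₁) - f (x₂, y₂)) := by ring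
  rw [show L * ‖y₁ - y₂‖ * ‖x₁ - x₂‖ = L * ‖y₁ - y₂‖ * ‖d‖ from by rw [hd], heq]
  exact this

end aux2

section aux3

variable {F : Type*} [NormedAddCommGroup F] [InnerProductSpace ℝ F]

lemma norm_combo (a b : F) (t : ℝ) :
    ‖(1 - t) • a + t • b‖ ^ 2
      = (1 - t) * ‖a‖ ^ 2 + t * ‖b‖ ^ 2 - t * (1 - t) * ‖a - b‖ ^ 2 := by
  have e1 : ‖(1 - t) • a + t • b‖ ^ 2 = inner ℝ ((1-t) • a + t • b) ((1-t) • a + t • b) :=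
    (real_inner_self_eq_norm_sq _).symm
  have e2 : ‖a‖ ^ 2 = inner ℝ a a := (real_inner_self_eq_norm_sq a).symm
  have e3 : ‖b‖ ^ 2 = inner ℝ b b := (real_inner_self_eq_norm_sq b).symm
  have e4 : ‖a - b‖ ^ 2 = inner ℝ a a - 2 * inner ℝ a b + inner ℝ b b := by
    rw [← real_inner_self_eq_norm_sq]; exact real_inner_sub_sub_self a b
  rw [e1, e2, e3, e4]
  simp only [inner_add_add_self, real_inner_smul_left, real_inner_smul_right]
  rw [real_inner_comm b a]
  ring

lemma strong_max {Y : Set F} (hYconv : Convex ℝ Y) {φ h : F → ℝ} {μ : ℝ} (hμ : 0 < μ)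
    (hconc : ConcaveOn ℝ Y (fun y => φ y + (μ / 2) * ‖y‖ ^ 2))
    (hconv : ConvexOn ℝ Set.univ h)
    {y₀ : F} (hy₀ : y₀ ∈ Y) (hmax : ∀ y ∈ Y, φ y - h y ≤ φ y₀ - h y₀) :
    ∀ y ∈ Y, φ y - h y + (μ / 2) * ‖y - y₀‖ ^ 2 ≤ φ y₀ - h y₀ := by
  intro y hy
  have key : ∀ t : ℝ, t ∈ Set.Ioo (0:ℝ) 1 →
      φ y - h y + (μ / 2) * (1 - t) * ‖y - y₀‖ ^ 2 ≤ φ y₀ - h y₀ := by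
    intro t ht
    set yt := (1 - t) • y₀ + t • y with hyt
    have hytY : yt ∈ Y := hYconv hy₀ hy (by linarith [ht.2]) ht.1.le (by ring)
    have hc := hconc.2 hy₀ hy (by linarith [ht.2] : (0:ℝ) ≤ 1 - t) (ht.1.le : (0:ℝ) ≤ t)
      (by ring : 1 - t + t = 1)
    have hh := hconv.2 (Set.mem_univ y₀) (Set.mem_univ y)
      (by linarith [ht.2] : (0:ℝ) ≤ 1 - t) (ht.1.le : (0:ℝ) ≤ t) (by ring : 1 - t + t = 1)
    simp only [smul_eq_mul] at hc hh
    have hmax' := hmax yt hytY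
    have hn := norm_combo y₀ y t
    simp only [← hyt] at hc hh hn
    have hnorm : ‖y₀ - y‖ = ‖y - y₀‖ := norm_sub_rev _ _
    rw [hnorm] at hn
    rw [hn] at hc
    have e2 : t * (φ y - h y + (μ / 2) * (1 - t) * ‖y - y₀‖ ^ 2) ≤ t * (φ y₀ - h y₀) := by
      linarith [hc, hh, hmax']
    have e3 := (mul_le_mul_iff_right₀ ht.1).mp e2
    linarith [e3]
  have hlim : Tendsto (fun t : ℝ => φ y - h y + (μ / 2) * (1 - t) * ‖y - y₀‖ ^ 2)
      (𝓝[>] (0:ℝ)) (𝓝 (φ y - h y + (μ / 2) * (1 - 0) * ‖y - y₀‖ ^ 2)) := by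
    apply Tendsto.mono_left _ nhdsWithin_le_nhds
    exact (Continuous.tendsto (by continuity) 0)
  have hev : ∀ᶠ t in 𝓝[>] (0:ℝ),
      φ y - h y + (μ / 2) * (1 - t) * ‖y - y₀‖ ^ 2 ≤ φ y₀ - h y₀ := by
    filter_upwards [Ioo_mem_nhdsGT_of_mem (Set.mem_Ico.2 ⟨le_refl 0, zero_lt_one⟩)] with t ht
    exact key t ht
  have := le_of_tendsto hlim hev
  simpa using this

end aux3


set_option maxHeartbeats 1000000 in
/-- Under the same assumptions (f L-smooth, f(x,·) μ-strongly concave, h convex,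
Y compact convex), the function `Φ x = max_{y ∈ Y} (f (x,y) - h y)` is differentiable with
`∇Φ(x) = ∇₁ f (x, ystar x)`, and `∇Φ` is `L * (1 + κ)`-Lipschitz, where `κ = L / μ`. -/
theorem Phi_smooth (m n : ℕ) (L μ : ℝ) (hL : 0 ≤ L) (hμ : 0 < μ)
    (f : (EuclideanSpace ℝ (Fin m)) × (EuclideanSpace ℝ (Fin n)) → ℝ)
    (Y : Set (EuclideanSpace ℝ (Fin n))) (hYne : Y.Nonempty)
    (hYconv : Convex ℝ Y) (hYcpt : IsCompact Y)
    (h : EuclideanSpace ℝ (Fin n) → ℝ) (hconv : ConvexOn ℝ Set.univ h)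
    (hdiff : Differentiable ℝ f)
    (hsmooth : LipschitzWith L.toNNReal (fderiv ℝ f))
    (hconc : ∀ x, ConcaveOn ℝ Y (fun y => f (x, y) + (μ / 2) * ‖y‖ ^ 2))
    (ystar : EuclideanSpace ℝ (Fin m) → EuclideanSpace ℝ (Fin n))
    (hmem : ∀ x, ystar x ∈ Y)
    (hmax : ∀ x, ∀ y ∈ Y, f (x, y) - h y ≤ f (x, ystar x) - h (ystar x))
    (Φ : EuclideanSpace ℝ (Fin m) → ℝ)
    (hΦ : ∀ x, Φ x = f (x, ystar x) - h (ystar x)) :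
    (∀ x, HasFDerivAt Φ (fderiv ℝ (fun x' => f (x', ystar x)) x) x) ∧
      LipschitzWith (L * (1 + L / μ)).toNNReal
        (fun x => fderiv ℝ (fun x' => f (x', ystar x)) x) := by
  have hκ : 0 ≤ L / μ := div_nonneg hL hμ.le
  have hC : 0 ≤ L * (1 + L / μ) := mul_nonneg hL (by linarith)
  -- Step A : partial derivative in the first variable
  have hA : ∀ (x : EuclideanSpace ℝ (Fin m)) (c : EuclideanSpace ℝ (Fin n)),
      HasFDerivAt (fun x' => f (x', c))
        ((fderiv ℝ f (x, c)).comp (ContinuousLinearMap.inl ℝ _ _)) x := by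
    intro x c
    exact (hdiff (x, c)).hasFDerivAt.comp x (hasFDerivAt_prodMk_left x c)
  have hgdef : ∀ x, fderiv ℝ (fun x' => f (x', ystar x)) x
      = (fderiv ℝ f (x, ystar x)).comp (ContinuousLinearMap.inl ℝ _ _) :=
    fun x => (hA x (ystar x)).fderiv
  -- Step B : ystar is (L/μ)-Lipschitz
  have hstar : ∀ x₁ x₂, ‖ystar x₁ - ystar x₂‖ ≤ (L / μ) * ‖x₁ - x₂‖ := by
    intro x₁ x₂
    have s1 := strong_max hYconv hμ (hconc x₁) hconv (hmem x₁) (hmax x₁) (ystar x₂) (hmem x₂)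
    have s2 := strong_max hYconv hμ (hconc x₂) hconv (hmem x₂) (hmax x₂) (ystar x₁) (hmem x₁)
    have hcb := (abs_le.mp (cross_bound hL hdiff hsmooth x₁ x₂ (ystar x₁) (ystar x₂))).2
    have hn12 : ‖ystar x₂ - ystar x₁‖ = ‖ystar x₁ - ystar x₂‖ := norm_sub_rev _ _
    rw [hn12] at s1
    have key : μ * ‖ystar x₁ - ystar x₂‖ ^ 2 ≤ L * ‖ystar x₁ - ystar x₂‖ * ‖x₁ - x₂‖ := by
      linarith [s1, s2, hcb]
    rcases eq_or_lt_of_le (norm_nonneg (ystar x₁ - ystar x₂)) with h0 | h0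
    · rw [← h0]
      exact mul_nonneg hκ (norm_nonneg _)
    · rw [div_mul_eq_mul_div, le_div_iff₀ hμ]
      nlinarith [key, h0]
  -- Step C : Lipschitz bound on the full gradient difference
  have hDlip : ∀ x₁ x₂, ‖fderiv ℝ f (x₁, ystar x₁) - fderiv ℝ f (x₂, ystar x₂)‖
      ≤ L * (1 + L / μ) * ‖x₁ - x₂‖ := by
    intro x₁ x₂
    have h1 := hsmooth.dist_le_mul (x₁, ystar x₁) (x₂, ystar x₂)
    rw [dist_eq_norm, dist_eq_norm, Real.coe_toNNReal _ hL] at h1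
    have h2 : ‖((x₁, ystar x₁) : (EuclideanSpace ℝ (Fin m)) × (EuclideanSpace ℝ (Fin n)))
        - (x₂, ystar x₂)‖ = max ‖x₁ - x₂‖ ‖ystar x₁ - ystar x₂‖ := by
      rw [Prod.norm_def]
      rfl
    rw [h2] at h1
    have h3 : max ‖x₁ - x₂‖ ‖ystar x₁ - ystar x₂‖ ≤ (1 + L / μ) * ‖x₁ - x₂‖ := by
      apply max_le
      · nlinarith [norm_nonneg (x₁ - x₂)]
      · calc ‖ystar x₁ - ystar x₂‖ ≤ L / μ * ‖x₁ - x₂‖ := hstar x₁ x₂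
          _ ≤ (1 + L / μ) * ‖x₁ - x₂‖ := by nlinarith [norm_nonneg (x₁ - x₂)]
    calc ‖fderiv ℝ f (x₁, ystar x₁) - fderiv ℝ f (x₂, ystar x₂)‖
        ≤ L * max ‖x₁ - x₂‖ ‖ystar x₁ - ystar x₂‖ := h1
      _ ≤ L * ((1 + L / μ) * ‖x₁ - x₂‖) := mul_le_mul_of_nonneg_left h3 hL
      _ = L * (1 + L / μ) * ‖x₁ - x₂‖ := by ring
  -- Step C' : the Lipschitz claim
  have hglip : LipschitzWith (L * (1 + L / μ)).toNNReal
      (fun x => fderiv ℝ (fun x' => f (x', ystar x)) x) := by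
    apply LipschitzWith.of_dist_le_mul
    intro x₁ x₂
    rw [Real.coe_toNNReal _ hC, dist_eq_norm, hgdef x₁, hgdef x₂]
    have hcomp : (fderiv ℝ f (x₁, ystar x₁)).comp
          (ContinuousLinearMap.inl ℝ (EuclideanSpace ℝ (Fin m)) (EuclideanSpace ℝ (Fin n)))
        - (fderiv ℝ f (x₂, ystar x₂)).comp (ContinuousLinearMap.inl ℝ _ _)
        = (fderiv ℝ f (x₁, ystar x₁) - fderiv ℝ f (x₂, ystar x₂)).comp
          (ContinuousLinearMap.inl ℝ _ _) := by
      ext u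
      simp
    rw [hcomp]
    apply ContinuousLinearMap.opNorm_le_bound _ (mul_nonneg hC dist_nonneg)
    intro u
    have happ : ((fderiv ℝ f (x₁, ystar x₁) - fderiv ℝ f (x₂, ystar x₂)).comp
        (ContinuousLinearMap.inl ℝ _ _)) u
        = (fderiv ℝ f (x₁, ystar x₁) - fderiv ℝ f (x₂, ystar x₂)) (u, 0) := rfl
    have hnu : ‖((u, 0) : (EuclideanSpace ℝ (Fin m)) × (EuclideanSpace ℝ (Fin n)))‖ = ‖u‖ := by
      rw [Prod.norm_def]
      simp
    rw [happ, dist_eq_norm]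
    calc ‖(fderiv ℝ f (x₁, ystar x₁) - fderiv ℝ f (x₂, ystar x₂)) (u, 0)‖
        ≤ ‖fderiv ℝ f (x₁, ystar x₁) - fderiv ℝ f (x₂, ystar x₂)‖ * ‖((u, 0) :
            (EuclideanSpace ℝ (Fin m)) × (EuclideanSpace ℝ (Fin n)))‖ :=
          ContinuousLinearMap.le_opNorm _ _
      _ ≤ (L * (1 + L / μ) * ‖x₁ - x₂‖) * ‖u‖ := by
          rw [hnu]
          exact mul_le_mul_of_nonneg_right (hDlip x₁ x₂) (norm_nonneg u)
  -- Step D : differentiability of Φ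
  have hderiv : ∀ x, HasFDerivAt Φ (fderiv ℝ (fun x' => f (x', ystar x)) x) x := by
    intro x
    rw [hasFDerivAt_iff_isLittleO_nhds_zero]
    have hbound : ∀ u, ‖Φ (x + u) - Φ x - (fderiv ℝ (fun x' => f (x', ystar x)) x) u‖
        ≤ (L * (1 + L / μ)) * ‖u‖ ^ 2 := by
      intro u
      have hDu : (fderiv ℝ (fun x' => f (x', ystar x)) x) u
          = fderiv ℝ f (x, ystar x) (u, 0) := by
        rw [hgdef x]; rfl
      have hnu : ‖((u, 0) : (EuclideanSpace ℝ (Fin m)) × (EuclideanSpace ℝ (Fin n)))‖ = ‖u‖ := by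
        rw [Prod.norm_def]; simp
      -- Taylor bound at y = ystar x
      have t1 := taylor_bound hL hdiff hsmooth (x, ystar x) (x + u, ystar x)
      have hq1 : ((x + u, ystar x) : (EuclideanSpace ℝ (Fin m)) × (EuclideanSpace ℝ (Fin n)))
          - (x, ystar x) = (u, 0) := by
        simp [Prod.mk_sub_mk]
      rw [hq1, hnu] at t1
      -- Taylor bound at y' = ystar (x + u)
      have t2 := taylor_bound hL hdiff hsmooth (x, ystar (x + u)) (x + u, ystar (x + u))
      have hq2 : ((x + u, ystar (x + u)) : (EuclideanSpace ℝ (Fin m)) × (EuclideanSpace ℝ (Fin n)))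
          - (x, ystar (x + u)) = (u, 0) := by
        simp [Prod.mk_sub_mk]
      rw [hq2, hnu] at t2
      -- gradient difference in the y slot
      have hyy : ‖ystar (x + u) - ystar x‖ ≤ L / μ * ‖u‖ := by
        have := hstar (x + u) x
        simpa using this
      have hdd : ‖fderiv ℝ f (x, ystar (x + u)) (u, 0) - fderiv ℝ f (x, ystar x) (u, 0)‖
          ≤ L * (L / μ) * ‖u‖ ^ 2 := by
        have e1 : fderiv ℝ f (x, ystar (x + u)) (u, 0) - fderiv ℝ f (x, ystar x) (u, 0)
            = (fderiv ℝ f (x, ystar (x + u)) - fderiv ℝ f (x, ystar x)) (u, 0) := by simp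
        have e2 := hsmooth.dist_le_mul (x, ystar (x + u)) (x, ystar x)
        rw [dist_eq_norm, dist_eq_norm, Real.coe_toNNReal _ hL] at e2
        have e3 : ‖((x, ystar (x + u)) : (EuclideanSpace ℝ (Fin m)) ×
            (EuclideanSpace ℝ (Fin n))) - (x, ystar x)‖ = ‖ystar (x + u) - ystar x‖ := by
          rw [Prod.norm_def]; simp
        rw [e3] at e2
        calc ‖fderiv ℝ f (x, ystar (x + u)) (u, 0) - fderiv ℝ f (x, ystar x) (u, 0)‖
            = ‖(fderiv ℝ f (x, ystar (x + u)) - fderiv ℝ f (x, ystar x)) (u, 0)‖ := by rw [e1]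
          _ ≤ ‖fderiv ℝ f (x, ystar (x + u)) - fderiv ℝ f (x, ystar x)‖ * ‖((u, 0) :
              (EuclideanSpace ℝ (Fin m)) × (EuclideanSpace ℝ (Fin n)))‖ :=
              ContinuousLinearMap.le_opNorm _ _
          _ ≤ (L * ‖ystar (x + u) - ystar x‖) * ‖u‖ := by
              rw [hnu]
              exact mul_le_mul_of_nonneg_right e2 (norm_nonneg u)
          _ ≤ (L * (L / μ * ‖u‖)) * ‖u‖ := by
              have := mul_le_mul_of_nonneg_left hyy hL
              exact mul_le_mul_of_nonneg_right this (norm_nonneg u)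
          _ = L * (L / μ) * ‖u‖ ^ 2 := by ring
      -- sandwich bounds
      have low1 : f (x + u, ystar x) - h (ystar x) ≤ Φ (x + u) := by
        rw [hΦ (x + u)]; exact hmax (x + u) (ystar x) (hmem x)
      have up2 : f (x, ystar (x + u)) - h (ystar (x + u)) ≤ Φ x := by
        rw [hΦ x]; exact hmax x (ystar (x + u)) (hmem (x + u))
      have hΦx : Φ x = f (x, ystar x) - h (ystar x) := hΦ x
      have hΦxu : Φ (x + u) = f (x + u, ystar (x + u)) - h (ystar (x + u)) := hΦ (x + u)
      have ht1 := abs_le.mp t1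
      have ht2 := abs_le.mp t2
      have hddl : |fderiv ℝ f (x, ystar (x + u)) (u, 0) - fderiv ℝ f (x, ystar x) (u, 0)|
          ≤ L * (L / μ) * ‖u‖ ^ 2 := by
        rw [← Real.norm_eq_abs]; exact hdd
      have hddl2 := abs_le.mp hddl
      rw [hDu, Real.norm_eq_abs, abs_le]
      have hextra : 0 ≤ L * (L / μ) * ‖u‖ ^ 2 :=
        mul_nonneg (mul_nonneg hL hκ) (sq_nonneg _)
      constructor
      · -- lower bound : err ≥ -C‖u‖²
        linarith [ht1.1, low1, hΦx, hextra]
      · -- upper bound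
        linarith [ht2.2, up2, hΦxu, hddl2.2, hextra]
    have hO : (fun u => Φ (x + u) - Φ x - (fderiv ℝ (fun x' => f (x', ystar x)) x) u)
        =O[𝓝 0] (fun u => ‖u‖ ^ 2) := by
      apply Asymptotics.IsBigO.of_bound (L * (1 + L / μ))
      filter_upwards with u
      have : ‖‖u‖ ^ 2‖ = ‖u‖ ^ 2 := by
        rw [Real.norm_eq_abs, abs_of_nonneg (sq_nonneg _)]
      rw [this]
      exact hbound u
    have ho : (fun u : EuclideanSpace ℝ (Fin m) => ‖u‖ ^ 2) =o[𝓝 0] (fun u => u) := by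
      rw [Asymptotics.isLittleO_iff]
      intro c hc
      filter_upwards [Metric.closedBall_mem_nhds (0 : EuclideanSpace ℝ (Fin m)) hc] with u hu
      rw [Metric.mem_closedBall, dist_zero_right] at hu
      calc ‖‖u‖ ^ 2‖ = ‖u‖ * ‖u‖ := by
            rw [Real.norm_eq_abs, abs_of_nonneg (sq_nonneg _), sq]
        _ ≤ c * ‖u‖ := mul_le_mul_of_nonneg_right hu (norm_nonneg u)
    exact hO.trans_isLittleO ho
  exact ⟨hderiv, hglip⟩
end

section
/- Let θ ∈ (0, 1/2) and let (d_t)_{t≥t₀} be a positive nonincreasing sequence satisfying d_{t-1} − d_t ≥ (1/(2Mc²)) d_t^{2(1−θ)} for all t > t₀, where M, c > 0. Define C = min{ (1−2θ)/(8Mc²), d_{t₀}^{−(1−2θ)}(1 − 2^{−(1−2θ)}) } > 0. Then for all t ≥ t₀, d_t ≤ (C(t−t₀))^{−1/(1−2θ)}. -/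
open Real Filter Topology

/-- Convexity-type inequality: for `0 < x ≤ y` and `0 < α ≤ 1`,
`α * y ^ (-(1+α)) * (y - x) ≤ x ^ (-α) - y ^ (-α)`. -/
lemma key_ineq {x y α : ℝ} (hx : 0 < x) (hxy : x ≤ y) (hα0 : 0 < α) (hα1 : α ≤ 1) :
    α * y ^ (-(1 + α)) * (y - x) ≤ x ^ (-α) - y ^ (-α) := by
  have hy : 0 < y := hx.trans_le hxy
  set u : ℝ := (y - x) / y with hu
  have hu0 : 0 ≤ u := div_nonneg (by linarith) hy.le
  have hu1 : u < 1 := by rw [hu, div_lt_one hy]; linarith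
  have hau : α * u < 1 :=
    lt_of_le_of_lt (by nlinarith : α * u ≤ u) hu1
  have hau0 : 0 ≤ α * u := mul_nonneg hα0.le hu0
  have hb : (x / y) ^ α ≤ 1 - α * u := by
    have hs : -1 ≤ x / y - 1 := by
      have : 0 < x / y := div_pos hx hy
      linarith
    have := rpow_one_add_le_one_add_mul_self hs hα0.le hα1
    have hxy1 : 1 + (x / y - 1) = x / y := by ring
    rw [hxy1] at this
    have hus : x / y - 1 = -u := by
      rw [hu]; field_simp; ring
    rw [hus] at this
    linarith
  have hxa : 0 < x ^ α := Real.rpow_pos_of_pos hx α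
  have hya : 0 < y ^ α := Real.rpow_pos_of_pos hy α
  have hbb : x ^ α ≤ y ^ α * (1 - α * u) := by
    have e : (x / y) ^ α = x ^ α / y ^ α := Real.div_rpow hx.le hy.le α
    rw [e, div_le_iff₀ hya] at hb
    linarith [hb]
  -- key algebraic step : x^α * (1 + αu) ≤ y^α
  have hkey : x ^ α * (1 + α * u) ≤ y ^ α := by nlinarith [sq_nonneg (α * u)]
  have e1 : x ^ (-α) = 1 / x ^ α := by rw [Real.rpow_neg hx.le, one_div]
  have e2 : y ^ (-α) = 1 / y ^ α := by rw [Real.rpow_neg hy.le, one_div]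
  have e3 : y ^ (-(1 + α)) = 1 / (y * y ^ α) := by
    rw [Real.rpow_neg hy.le, Real.rpow_add hy, Real.rpow_one, one_div]
  rw [e1, e2, e3]
  have elhs : α * (1 / (y * y ^ α)) * (y - x) = α * u / y ^ α := by
    rw [hu]; field_simp
  rw [elhs]
  have h2 : (1 + α * u) / y ^ α ≤ 1 / x ^ α := by
    rw [div_le_div_iff₀ hya hxa]
    nlinarith
  have : α * u / y ^ α = (1 + α * u) / y ^ α - 1 / y ^ α := by
    field_simp; ring
  rw [this]
  linarith

/-- sublinear KŁ rate for `θ ∈ (0, 1/2)`. If a positive sequence, nonincreasing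
from `t₀` on, satisfies `d (t-1) - d t ≥ (1/(2Mc²)) d t ^ (2(1-θ))` for `t > t₀`, then with
`C = min ((1-2θ)/(8Mc²)) (d t₀ ^ (-(1-2θ)) * (1 - 2 ^ (-(1-2θ))))` we have `C > 0` and
`d t ≤ (C (t - t₀)) ^ (-1/(1-2θ))` for all `t > t₀`. -/
theorem sublinear_convergence (θ M c : ℝ) (hθ : θ ∈ Set.Ioo (0 : ℝ) (1/2))
    (hM : 0 < M) (hc : 0 < c) (t₀ : ℕ) (d : ℕ → ℝ)
    (hpos : ∀ t ≥ t₀, 0 < d t)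
    (hmono : ∀ s t, t₀ ≤ s → s ≤ t → d t ≤ d s)
    (hrec : ∀ t > t₀, 1 / (2 * M * c ^ 2) * d t ^ (2 * (1 - θ)) ≤ d (t - 1) - d t) :
    0 < min ((1 - 2 * θ) / (8 * M * c ^ 2))
        (d t₀ ^ (-(1 - 2 * θ)) * (1 - (2 : ℝ) ^ (-(1 - 2 * θ)))) ∧
    ∀ t > t₀, d t ≤
      (min ((1 - 2 * θ) / (8 * M * c ^ 2))
          (d t₀ ^ (-(1 - 2 * θ)) * (1 - (2 : ℝ) ^ (-(1 - 2 * θ)))) *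
        ((t : ℝ) - (t₀ : ℝ))) ^ (-(1 / (1 - 2 * θ))) := by
  obtain ⟨hθ0, hθh⟩ := hθ
  have hdt0 : 0 < d t₀ := hpos t₀ le_rfl
  set α : ℝ := 1 - 2 * θ with hαdef
  have hα0 : 0 < α := by rw [hαdef]; linarith
  have hα1 : α < 1 := by rw [hαdef]; linarith
  have hMc : (0 : ℝ) < 2 * M * c ^ 2 := by positivity
  set C : ℝ := min (α / (8 * M * c ^ 2)) (d t₀ ^ (-α) * (1 - (2 : ℝ) ^ (-α))) with hCdef
  have h2lt : (2 : ℝ) ^ (-α) < 1 :=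
    Real.rpow_lt_one_of_one_lt_of_neg one_lt_two (by linarith)
  have hC0 : 0 < C :=
    lt_min (by positivity) (mul_pos (Real.rpow_pos_of_pos hdt0 _) (by linarith))
  have hCle1 : C ≤ α / (8 * M * c ^ 2) := min_le_left _ _
  have hCle2 : C ≤ d t₀ ^ (-α) * (1 - (2 : ℝ) ^ (-α)) := min_le_right _ _
  refine ⟨hC0, ?_⟩
  clear_value C
  -- per-step increment
  have step : ∀ t, t₀ < t → d (t - 1) ^ (-α) + C ≤ d t ^ (-α) := by
    intro t ht
    have ht1 : t₀ ≤ t - 1 := by omega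
    have hdt : 0 < d t := hpos t ht.le
    have hdt1 : 0 < d (t - 1) := hpos _ ht1
    have hmt : d t ≤ d (t - 1) := hmono (t - 1) t ht1 (by omega)
    have hr := hrec t ht
    have hexp : 2 * (1 - θ) = 1 + α := by rw [hαdef]; ring
    rw [hexp] at hr
    by_cases hcase : d (t - 1) ≤ 2 * d t
    · -- slow decrease case
      have hkey := key_ineq hdt hmt hα0 hα1.le
      have hA : 0 < d (t - 1) ^ (-(1 + α)) := Real.rpow_pos_of_pos hdt1 _
      have hP : (1 / 4 : ℝ) ≤ d t ^ (1 + α) * d (t - 1) ^ (-(1 + α)) := by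
        have e : d t ^ (1 + α) * d (t - 1) ^ (-(1 + α)) = (d t / d (t - 1)) ^ (1 + α) := by
          rw [Real.div_rpow hdt.le hdt1.le, Real.rpow_neg hdt1.le, div_eq_mul_inv]
        rw [e]
        have h12 : (1 / 2 : ℝ) ≤ d t / d (t - 1) := by
          rw [le_div_iff₀ hdt1]; linarith
        calc (1 / 4 : ℝ) = (1 / 2 : ℝ) ^ ((2 : ℕ) : ℝ) := by
              rw [Real.rpow_natCast]; norm_num
          _ ≤ (1 / 2 : ℝ) ^ (1 + α) :=
              Real.rpow_le_rpow_of_exponent_ge (by norm_num) (by norm_num)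
                (by push_cast; linarith)
          _ ≤ (d t / d (t - 1)) ^ (1 + α) :=
              Real.rpow_le_rpow (by norm_num) h12 (by linarith)
      have hchain : α / (8 * M * c ^ 2) ≤
          α * d (t - 1) ^ (-(1 + α)) * (d (t - 1) - d t) := by
        have hαA : 0 ≤ α * d (t - 1) ^ (-(1 + α)) := by positivity
        calc α / (8 * M * c ^ 2)
            = α * (1 / (2 * M * c ^ 2) * (1 / 4)) := by
              have h8 : (8 : ℝ) * M * c ^ 2 = 2 * M * c ^ 2 * 4 := by ring
              rw [one_div, one_div, ← mul_inv, ← h8, div_eq_mul_inv]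
          _ ≤ α * (1 / (2 * M * c ^ 2) * (d t ^ (1 + α) * d (t - 1) ^ (-(1 + α)))) := by
              gcongr
          _ = α * d (t - 1) ^ (-(1 + α)) * (1 / (2 * M * c ^ 2) * d t ^ (1 + α)) := by
              ring
          _ ≤ α * d (t - 1) ^ (-(1 + α)) * (d (t - 1) - d t) := by gcongr
      have hfin : C ≤ d t ^ (-α) - d (t - 1) ^ (-α) :=
        le_trans hCle1 (le_trans hchain hkey)
      linarith [hfin]
    · -- fast decrease case : d (t-1) > 2 * d t
      push_neg at hcase
      have h1 : d (t - 1) ^ (-α) ≤ (2 : ℝ) ^ (-α) * d t ^ (-α) := by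
        have h2x : (0 : ℝ) < 2 * d t := by linarith
        have := Real.rpow_le_rpow_of_nonpos h2x hcase.le (by linarith : -α ≤ 0)
        calc d (t - 1) ^ (-α) ≤ (2 * d t) ^ (-α) := this
          _ = (2 : ℝ) ^ (-α) * d t ^ (-α) := Real.mul_rpow (by norm_num) hdt.le
      have h2 : d t₀ ^ (-α) ≤ d t ^ (-α) :=
        Real.rpow_le_rpow_of_nonpos hdt (hmono t₀ t le_rfl ht.le) (by linarith)
      have hCle := hCle2
      have h2pos : (0 : ℝ) < (2 : ℝ) ^ (-α) := Real.rpow_pos_of_pos (by norm_num) _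
      nlinarith [h2, h1]
  -- telescoping
  have main : ∀ t, t₀ ≤ t → d t₀ ^ (-α) + C * ((t : ℝ) - (t₀ : ℝ)) ≤ d t ^ (-α) := by
    intro t ht
    induction t, ht using Nat.le_induction with
    | base => simp
    | succ n hn ih =>
      have hs := step (n + 1) (by omega)
      have hn1 : (n + 1) - 1 = n := by omega
      rw [hn1] at hs
      push_cast
      push_cast at ih
      linarith
  intro t ht
  have hdt : 0 < d t := hpos t ht.le
  have htR : (t₀ : ℝ) < (t : ℝ) := by exact_mod_cast ht
  have hCt : 0 < C * ((t : ℝ) - (t₀ : ℝ)) := mul_pos hC0 (by linarith)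
  have h5 : C * ((t : ℝ) - (t₀ : ℝ)) ≤ d t ^ (-α) := by
    have := main t ht.le
    have := Real.rpow_pos_of_pos hdt0 (-α)
    linarith
  have h6 := Real.rpow_le_rpow_of_nonpos hCt h5
    (by rw [neg_nonpos]; positivity : -(1 / α) ≤ 0)
  have h7 : (d t ^ (-α)) ^ (-(1 / α)) = d t := by
    rw [← Real.rpow_mul hdt.le]
    have : (-α) * (-(1 / α)) = 1 := by field_simp
    rw [this, Real.rpow_one]
  rw [h7] at h6
  exact h6
end

section
/- Let Φ: ℝ^m → ℝ be differentiable with L_Φ-Lipschitz gradient, g: ℝ^m → ℝ ∪ {+∞} proper, and let x⁺ ∈ argmin_u { g(u) + (1/(2η))‖u − x + η w‖² } for some vector w ∈ ℝ^m and step η > 0. Then Φ(x⁺) + g(x⁺) ≤ Φ(x) + g(x) − (1/(2η) − L_Φ/2)‖x⁺ − x‖² + ‖x⁺ − x‖·‖∇Φ(x) − w‖. -/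
open Real Filter Topology

open intervalIntegral in
-- descent lemma
lemma descent_lemma {m : ℕ} {LΦ : ℝ} (hLΦ : 0 ≤ LΦ)
    (Φ : EuclideanSpace ℝ (Fin m) → ℝ) (hdiff : Differentiable ℝ Φ)
    (hlip : LipschitzWith LΦ.toNNReal (gradient Φ)) (x y : EuclideanSpace ℝ (Fin m)) :
    Φ y ≤ Φ x + inner ℝ (gradient Φ x) (y - x) + LΦ / 2 * ‖y - x‖ ^ 2 := by
  set v := y - x with hv
  have hline : ∀ t : ℝ, HasDerivAt (fun t : ℝ => x + t • v) v t := by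
    intro t
    simpa using (hasDerivAt_id t).smul_const v
  have hφ : ∀ t : ℝ, HasDerivAt (fun t : ℝ => Φ (x + t • v))
      (inner ℝ (gradient Φ (x + t • v)) v : ℝ) t := by
    intro t
    have h1 := (hdiff (x + t • v)).hasGradientAt
    have h2 : HasFDerivAt Φ (InnerProductSpace.toDual ℝ _ (gradient Φ (x + t • v)))
        (x + t • v) := h1
    exact h2.comp_hasDerivAt t (hline t)
  have hcont : Continuous fun t : ℝ => (inner ℝ (gradient Φ (x + t • v)) v : ℝ) := by
    have : Continuous fun t : ℝ => gradient Φ (x + t • v) :=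
      hlip.continuous.comp (by continuity)
    exact this.inner continuous_const
  have hFTC : Φ (x + (1:ℝ) • v) - Φ (x + (0:ℝ) • v)
      = ∫ t in (0:ℝ)..1, (inner ℝ (gradient Φ (x + t • v)) v : ℝ) :=
    (integral_eq_sub_of_hasDerivAt (fun t _ => hφ t)
      (hcont.intervalIntegrable 0 1)).symm
  have hbound : ∀ t ∈ Set.Icc (0:ℝ) 1,
      (inner ℝ (gradient Φ (x + t • v)) v : ℝ)
        ≤ inner ℝ (gradient Φ x) v + t * (LΦ * ‖v‖ ^ 2) := by
    intro t ht
    have h1 : (inner ℝ (gradient Φ (x + t • v)) v : ℝ)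
        = inner ℝ (gradient Φ x) v + inner ℝ (gradient Φ (x + t • v) - gradient Φ x) v := by
      rw [inner_sub_left]; ring
    have h2 : (inner ℝ (gradient Φ (x + t • v) - gradient Φ x) v : ℝ)
        ≤ ‖gradient Φ (x + t • v) - gradient Φ x‖ * ‖v‖ := real_inner_le_norm _ _
    have h3 : ‖gradient Φ (x + t • v) - gradient Φ x‖ ≤ LΦ * ‖x + t • v - x‖ := by
      have := hlip.dist_le_mul (x + t • v) x
      simpa [dist_eq_norm, Real.coe_toNNReal _ hLΦ] using this
    have h4 : ‖x + t • v - x‖ = t * ‖v‖ := by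
      simp [norm_smul, abs_of_nonneg ht.1]
    nlinarith [norm_nonneg v, ht.1, mul_nonneg hLΦ (norm_nonneg v)]
  have hint : (∫ t in (0:ℝ)..1, (inner ℝ (gradient Φ (x + t • v)) v : ℝ))
      ≤ ∫ t in (0:ℝ)..1, (inner ℝ (gradient Φ x) v + t * (LΦ * ‖v‖ ^ 2) : ℝ) := by
    apply intervalIntegral.integral_mono_on (by norm_num)
      (hcont.intervalIntegrable 0 1)
      (((continuous_const.add (continuous_id.mul continuous_const))).intervalIntegrable 0 1)
    exact hbound
  have hval : (∫ t in (0:ℝ)..1, (inner ℝ (gradient Φ x) v + t * (LΦ * ‖v‖ ^ 2) : ℝ))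
      = inner ℝ (gradient Φ x) v + LΦ / 2 * ‖v‖ ^ 2 := by
    have hi2 : IntervalIntegrable (fun t : ℝ => t * (LΦ * ‖v‖ ^ 2)) MeasureTheory.volume 0 1 :=
      (continuous_id'.mul continuous_const).intervalIntegrable 0 1
    rw [intervalIntegral.integral_add intervalIntegrable_const hi2,
      intervalIntegral.integral_mul_const, integral_id]
    simp
    ring
  have := hFTC
  simp only [one_smul, zero_smul, add_zero] at this
  have : Φ y ≤ Φ x + (inner ℝ (gradient Φ x) v + LΦ / 2 * ‖v‖ ^ 2) := by
    have hy : x + v = y := by rw [hv]; abel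
    rw [hy] at this
    linarith [hint.trans_eq hval, this.le, this.ge]
  linarith


/-- inexact proximal gradient descent inequality. If `Φ` is differentiable with
`L_Φ`-Lipschitz gradient, `g : ℝ^m → ℝ ∪ {+∞}` is proper, and
`x⁺ ∈ argmin_u { g u + (1/(2η)) ‖u - x + η w‖² }`, then
`Φ x⁺ + g x⁺ ≤ Φ x + g x - (1/(2η) - L_Φ/2) ‖x⁺ - x‖² + ‖x⁺ - x‖ ‖∇Φ x - w‖`. -/
theorem inexact_prox_descent (m : ℕ) (LΦ η : ℝ) (hLΦ : 0 ≤ LΦ) (hη : 0 < η)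
    (Φ : EuclideanSpace ℝ (Fin m) → ℝ) (hdiff : Differentiable ℝ Φ)
    (hlip : LipschitzWith LΦ.toNNReal (gradient Φ))
    (g : EuclideanSpace ℝ (Fin m) → EReal)
    (hproper : ∃ u, g u ≠ ⊤) (hnebot : ∀ u, g u ≠ ⊥)
    (w x xp : EuclideanSpace ℝ (Fin m))
    (hprox : ∀ u, g xp + (((1 / (2 * η)) * ‖xp - x + η • w‖ ^ 2 : ℝ) : EReal) ≤
        g u + (((1 / (2 * η)) * ‖u - x + η • w‖ ^ 2 : ℝ) : EReal)) :
    (Φ xp : EReal) + g xp ≤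
      ((Φ x - (1 / (2 * η) - LΦ / 2) * ‖xp - x‖ ^ 2 +
          ‖xp - x‖ * ‖gradient Φ x - w‖ : ℝ) : EReal) + g x := by
  by_cases hgx : g x = ⊤
  · rw [hgx, EReal.add_top_of_ne_bot (EReal.coe_ne_bot _)]
    exact le_top
  · -- g x is real
    have hx := hprox x
    have hgxp : g xp ≠ ⊤ := by
      intro h
      rw [h, EReal.top_add_of_ne_bot (EReal.coe_ne_bot _)] at hx
      have : g x + (((1 / (2 * η)) * ‖x - x + η • w‖ ^ 2 : ℝ) : EReal) < ⊤ :=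
        EReal.add_lt_top hgx (EReal.coe_ne_top _)
      exact this.ne (top_le_iff.mp hx)
    set a := (g x).toReal with ha
    set b := (g xp).toReal with hb
    have hga : g x = (a : EReal) := (EReal.coe_toReal hgx (hnebot x)).symm
    have hgb : g xp = (b : EReal) := (EReal.coe_toReal hgxp (hnebot xp)).symm
    rw [hga, hgb] at hx ⊢
    rw [← EReal.coe_add, ← EReal.coe_add, EReal.coe_le_coe_iff] at hx
    suffices h : Φ xp + b ≤ (Φ x - (1 / (2 * η) - LΦ / 2) * ‖xp - x‖ ^ 2 +
        ‖xp - x‖ * ‖gradient Φ x - w‖) + a by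
      have := EReal.coe_le_coe_iff.mpr h
      simpa only [EReal.coe_add] using this
    -- expand norms
    have hexp : ‖xp - x + η • w‖ ^ 2
        = ‖xp - x‖ ^ 2 + 2 * (η * inner ℝ (xp - x) w) + ‖η • w‖ ^ 2 := by
      rw [norm_add_sq_real, real_inner_smul_right]
    have hxx : ‖x - x + η • w‖ ^ 2 = ‖η • w‖ ^ 2 := by simp
    rw [hexp, hxx] at hx
    have hηpos : (0:ℝ) < 1 / (2 * η) := by positivity
    have hprox_real : b ≤ a - (1 / (2 * η)) * ‖xp - x‖ ^ 2 - inner ℝ (xp - x) w := by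
      have h2η : 1 / (2 * η) * (2 * (η * inner ℝ (xp - x) w)) = inner ℝ (xp - x) w := by
        field_simp
      nlinarith [hx]
    have hdesc := descent_lemma hLΦ Φ hdiff hlip x xp
    have hcs : (inner ℝ (xp - x) (gradient Φ x - w) : ℝ)
        ≤ ‖xp - x‖ * ‖gradient Φ x - w‖ := real_inner_le_norm _ _
    have hinner : (inner ℝ (xp - x) (gradient Φ x - w) : ℝ)
        = inner ℝ (gradient Φ x) (xp - x) - inner ℝ (xp - x) w := by
      rw [inner_sub_right, real_inner_comm]
    linarith
end

section
/- Let (S_t)_{t≥t₀} be a nonnegative sequence satisfying S_t ≤ b·(t − t₀)^{−p} + (1/2)S_{t−1} for all t > t₀, where b ≥ 0 and p > 0. Then S_t ≤ O((t − t₀)^{−p}); explicitly, S_t ≤ 2^{t₀−t}S_{t₀} + (b/2^{t−t₀})∑_{s=1}^{t−t₀} 2^{s} s^{−p}, and the last sum is bounded by 2^{t₁+1} + 2^{t−t₀+1}((t−t₀)/2)^{−p} with t₁ = ⌊(t−t₀)/2⌋. -/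
open Real Filter Topology

lemma aux_part1 (t₀ : ℕ) (S : ℕ → ℝ)
    (b p : ℝ)
    (hrec : ∀ t > t₀, S t ≤ b * ((t : ℝ) - (t₀ : ℝ)) ^ (-p) + (1 / 2) * S (t - 1)) :
    ∀ k, 1 ≤ k → S (t₀ + k) ≤ S t₀ / 2 ^ k +
        (b / 2 ^ k) * ∑ s ∈ Finset.Icc 1 k, (2 : ℝ) ^ s * (s : ℝ) ^ (-p) := by
  intro k
  induction k with
  | zero => omega
  | succ k ih =>
    intro _
    have hr := hrec (t₀ + (k+1)) (by omega)
    have hcast : ((t₀ + (k+1) : ℕ) : ℝ) - (t₀ : ℝ) = ((k+1 : ℕ) : ℝ) := by push_cast; ring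
    rw [hcast] at hr
    have hprev : t₀ + (k + 1) - 1 = t₀ + k := by omega
    rw [hprev] at hr
    rcases Nat.eq_zero_or_pos k with hk0 | hk1
    · subst hk0
      simp only [Finset.Icc_self, Finset.sum_singleton] at *
      have h0 : S (t₀ + 0) = S t₀ := by norm_num
      calc S (t₀ + 1) ≤ b * ((1:ℕ):ℝ) ^ (-p) + (1/2) * S (t₀ + 0) := hr
        _ = S t₀ / 2 ^ 1 + (b / 2 ^ 1) * ((2:ℝ) ^ 1 * ((1:ℕ):ℝ) ^ (-p)) := by
            rw [h0]; ring
    · have ih' := ih hk1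
      have hsum : ∑ s ∈ Finset.Icc 1 (k+1), (2 : ℝ) ^ s * (s : ℝ) ^ (-p)
          = (∑ s ∈ Finset.Icc 1 k, (2 : ℝ) ^ s * (s : ℝ) ^ (-p))
            + (2:ℝ) ^ (k+1) * ((k+1 : ℕ) : ℝ) ^ (-p) := by
        rw [Finset.sum_Icc_succ_top (by omega)]
      calc S (t₀ + (k+1)) ≤ b * ((k+1:ℕ):ℝ) ^ (-p) + (1/2) * S (t₀ + k) := hr
        _ ≤ b * ((k+1:ℕ):ℝ) ^ (-p) + (1/2) * (S t₀ / 2 ^ k +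
              (b / 2 ^ k) * ∑ s ∈ Finset.Icc 1 k, (2 : ℝ) ^ s * (s : ℝ) ^ (-p)) := by
            nlinarith [ih']
        _ = S t₀ / 2 ^ (k+1) + (b / 2 ^ (k+1)) *
              ((∑ s ∈ Finset.Icc 1 k, (2 : ℝ) ^ s * (s : ℝ) ^ (-p))
                + (2:ℝ) ^ (k+1) * ((k+1 : ℕ) : ℝ) ^ (-p)) := by
            field_simp
            ring
        _ = _ := by rw [hsum]

/-- if a nonnegative sequence satisfies `S t ≤ b (t - t₀)^(-p) + (1/2) S (t-1)`
for `t > t₀`, then `S t ≤ 2^(t₀-t) S t₀ + (b / 2^(t-t₀)) ∑_{s=1}^{t-t₀} 2^s s^(-p)`, and with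
`t₁ = ⌊(t-t₀)/2⌋` the last sum is at most `2^(t₁+1) + 2^(t-t₀+1) ((t-t₀)/2)^(-p)`;
hence `S t = O((t - t₀)^(-p))`. -/
theorem sublinear_tail_recursion (t₀ : ℕ) (S : ℕ → ℝ) (hS : ∀ t, 0 ≤ S t)
    (b p : ℝ) (hb : 0 ≤ b) (hp : 0 < p)
    (hrec : ∀ t > t₀, S t ≤ b * ((t : ℝ) - (t₀ : ℝ)) ^ (-p) + (1 / 2) * S (t - 1)) :
    (∀ t > t₀, S t ≤ S t₀ / 2 ^ (t - t₀) +
        (b / 2 ^ (t - t₀)) * ∑ s ∈ Finset.Icc 1 (t - t₀), (2 : ℝ) ^ s * (s : ℝ) ^ (-p)) ∧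
      (∀ t > t₀, ∑ s ∈ Finset.Icc 1 (t - t₀), (2 : ℝ) ^ s * (s : ℝ) ^ (-p) ≤
        (2 : ℝ) ^ ((t - t₀) / 2 + 1) +
          (2 : ℝ) ^ (t - t₀ + 1) * (((t : ℝ) - (t₀ : ℝ)) / 2) ^ (-p)) := by
  constructor
  · intro t ht
    have h1 := aux_part1 t₀ S b p hrec (t - t₀) (by omega)
    rwa [Nat.add_sub_cancel' (Nat.le_of_lt ht)] at h1
  · intro t ht
    set n := t - t₀ with hn
    have hn1 : 1 ≤ n := by omega
    set t₁ := n / 2 with ht₁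
    have hcast : (t : ℝ) - (t₀ : ℝ) = (n : ℝ) := by
      rw [hn]; push_cast [Nat.cast_sub (Nat.le_of_lt ht)]; ring
    rw [hcast]
    have hnpos : (0:ℝ) < (n:ℝ) / 2 := by positivity
    -- split sum
    have hsplit : Finset.Icc 1 n = Finset.Ioc 0 n := by
      ext x; simp only [Finset.mem_Icc, Finset.mem_Ioc]; omega
    have hdecomp : (∑ s ∈ Finset.Ioc 0 t₁, (2 : ℝ) ^ s * (s : ℝ) ^ (-p))
        + (∑ s ∈ Finset.Ioc t₁ n, (2 : ℝ) ^ s * (s : ℝ) ^ (-p))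
        = ∑ s ∈ Finset.Ioc 0 n, (2 : ℝ) ^ s * (s : ℝ) ^ (-p) :=
      Finset.sum_Ioc_consecutive _ (by omega) (by omega)
    rw [hsplit, ← hdecomp]
    have hA : (∑ s ∈ Finset.Ioc 0 t₁, (2 : ℝ) ^ s * (s : ℝ) ^ (-p)) ≤ (2:ℝ) ^ (t₁ + 1) := by
      calc (∑ s ∈ Finset.Ioc 0 t₁, (2 : ℝ) ^ s * (s : ℝ) ^ (-p))
          ≤ ∑ s ∈ Finset.Ioc 0 t₁, (2 : ℝ) ^ s := by
            apply Finset.sum_le_sum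
            intro s hs
            have hs1 : (1:ℝ) ≤ (s:ℝ) := by
              have := (Finset.mem_Ioc.mp hs).1; exact_mod_cast this
            have : ((s:ℝ)) ^ (-p) ≤ 1 :=
              Real.rpow_le_one_of_one_le_of_nonpos hs1 (by linarith)
            nlinarith [pow_pos (by norm_num : (0:ℝ) < 2) s]
        _ ≤ ∑ s ∈ Finset.range (t₁ + 1), (2 : ℝ) ^ s := by
            apply Finset.sum_le_sum_of_subset_of_nonneg
            · intro s hs
              simp only [Finset.mem_Ioc] at hs
              simp [Finset.mem_range]; omega
            · intro s _ _; positivity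
        _ = (2:ℝ) ^ (t₁ + 1) - 1 := by
            rw [geom_sum_eq (by norm_num)]; ring
        _ ≤ (2:ℝ) ^ (t₁ + 1) := by linarith
    have hB : (∑ s ∈ Finset.Ioc t₁ n, (2 : ℝ) ^ s * (s : ℝ) ^ (-p))
        ≤ (2:ℝ) ^ (n + 1) * ((n:ℝ)/2) ^ (-p) := by
      calc (∑ s ∈ Finset.Ioc t₁ n, (2 : ℝ) ^ s * (s : ℝ) ^ (-p))
          ≤ ∑ s ∈ Finset.Ioc t₁ n, (2 : ℝ) ^ s * ((n:ℝ)/2) ^ (-p) := by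
            apply Finset.sum_le_sum
            intro s hs
            simp only [Finset.mem_Ioc] at hs
            have hsge : (n:ℝ)/2 ≤ (s:ℝ) := by
              have : n < 2 * (t₁ + 1) := by omega
              have h2 : (n:ℝ) < 2 * ((t₁:ℝ) + 1) := by exact_mod_cast this
              have h3 : (t₁:ℝ) + 1 ≤ (s:ℝ) := by exact_mod_cast hs.1
              linarith
            have := Real.rpow_le_rpow_of_nonpos hnpos hsge (by linarith : -p ≤ 0)
            have h2 : (0:ℝ) ≤ (2:ℝ)^s := by positivity
            nlinarith
        _ = (∑ s ∈ Finset.Ioc t₁ n, (2 : ℝ) ^ s) * ((n:ℝ)/2) ^ (-p) := by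
            rw [← Finset.sum_mul]
        _ ≤ (2:ℝ) ^ (n + 1) * ((n:ℝ)/2) ^ (-p) := by
            apply mul_le_mul_of_nonneg_right _ (by positivity)
            calc (∑ s ∈ Finset.Ioc t₁ n, (2 : ℝ) ^ s)
                ≤ ∑ s ∈ Finset.range (n + 1), (2 : ℝ) ^ s := by
                  apply Finset.sum_le_sum_of_subset_of_nonneg
                  · intro s hs
                    simp only [Finset.mem_Ioc] at hs
                    simp [Finset.mem_range]; omega
                  · intro s _ _; positivity
              _ = (2:ℝ) ^ (n + 1) - 1 := by
                  rw [geom_sum_eq (by norm_num)]; ring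
              _ ≤ (2:ℝ) ^ (n + 1) := by linarith
    linarith
end

section
/- Let Φ: ℝ^m → ℝ be continuous, g: ℝ^m → ℝ ∪ {+∞} proper lower semicontinuous, η > 0, and suppose x_{t+1} ∈ argmin_u { g(u) + (1/(2η))‖u − x_t + η w_t‖² } along a subsequence x_{t(j)} → x*, with (w_{t(j)}) bounded and ‖x_{t(j)} − x_{t(j)−1}‖ → 0 (indices shifted appropriately so x_{t(j)} is the prox output from x_{t(j)−1}, w_{t(j)−1}). Then g(x_{t(j)}) → g(x*), and hence (Φ+g)(x_{t(j)}) → (Φ+g)(x*). -/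
open Real Filter Topology

/-- continuity of the objective value along a convergent subsequence of
proximal iterates. If `Φ` is continuous, `g : ℝ^m → ℝ ∪ {+∞}` is proper lsc,
`x (t j)` is the proximal update from `(x (t j - 1), w (t j - 1))`, `x (t j) → xstar`,
`(w (t j - 1))` is bounded and `‖x (t j) - x (t j - 1)‖ → 0`, then
`g (x (t j)) → g xstar` and `(Φ + g)(x (t j)) → (Φ + g)(xstar)`. -/
theorem prox_value_convergence (m : ℕ)
    (Φ : EuclideanSpace ℝ (Fin m) → ℝ) (hΦ : Continuous Φ)
    (g : EuclideanSpace ℝ (Fin m) → EReal)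
    (hg_bot : ∀ z, g z ≠ ⊥) (hg_proper : ∃ z, g z ≠ ⊤)
    (hg_lsc : LowerSemicontinuous g)
    (η : ℝ) (hη : 0 < η)
    (x w : ℕ → EuclideanSpace ℝ (Fin m)) (t : ℕ → ℕ)
    (hmono : StrictMono t) (ht1 : ∀ j, 1 ≤ t j)
    (xstar : EuclideanSpace ℝ (Fin m))
    (hconv : Tendsto (fun j => x (t j)) atTop (𝓝 xstar))
    (hbdd : ∃ R : ℝ, ∀ j, ‖w (t j - 1)‖ ≤ R)
    (hdiff : Tendsto (fun j => ‖x (t j) - x (t j - 1)‖) atTop (𝓝 0))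
    (hprox : ∀ j, ∀ u,
      g (x (t j)) +
          (((1 / (2 * η)) * ‖x (t j) - x (t j - 1) + η • w (t j - 1)‖ ^ 2 : ℝ) : EReal) ≤
        g u + (((1 / (2 * η)) * ‖u - x (t j - 1) + η • w (t j - 1)‖ ^ 2 : ℝ) : EReal)) :
    Tendsto (fun j => g (x (t j))) atTop (𝓝 (g xstar)) ∧
      Tendsto (fun j => (Φ (x (t j)) : EReal) + g (x (t j))) atTop
        (𝓝 ((Φ xstar : EReal) + g xstar)) := by
  obtain ⟨R, hR⟩ := hbdd
  have hR0 : 0 ≤ R := le_trans (norm_nonneg _) (hR 0)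
  set v : ℕ → EuclideanSpace ℝ (Fin m) := fun j => x (t j) - x (t j - 1) + η • w (t j - 1)
    with hv
  set u : ℕ → EuclideanSpace ℝ (Fin m) := fun j => xstar - x (t j) with hu
  have hu0 : Tendsto (fun j => ‖u j‖) atTop (𝓝 0) := by
    have h : Tendsto u atTop (𝓝 0) := by
      simpa using (tendsto_const_nhds (x := xstar)).sub hconv
    simpa using h.norm
  have hvbdd : ∀ j, ‖v j‖ ≤ ‖x (t j) - x (t j - 1)‖ + η * R := by
    intro j
    calc ‖v j‖ ≤ ‖x (t j) - x (t j - 1)‖ + ‖η • w (t j - 1)‖ := norm_add_le _ _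
    _ ≤ ‖x (t j) - x (t j - 1)‖ + η * R := by
        rw [norm_smul, Real.norm_of_nonneg hη.le]
        exact add_le_add (le_refl _) (mul_le_mul_of_nonneg_left (hR j) hη.le)
  -- eventual bound on ‖v j‖
  have hvM : ∀ᶠ j in atTop, ‖v j‖ ≤ 1 + η * R := by
    filter_upwards [hdiff.eventually (gt_mem_nhds one_pos)] with j hj
    exact le_trans (hvbdd j) (by linarith)
  -- the error term
  set ε : ℕ → ℝ := fun j => (1 / (2 * η)) * ‖u j + v j‖ ^ 2 - (1 / (2 * η)) * ‖v j‖ ^ 2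
    with hε
  have hεident : ∀ j, ε j = (1 / (2 * η)) * (‖u j‖ ^ 2 + 2 * inner ℝ (u j) (v j)) := by
    intro j
    have := norm_add_sq_real (u j) (v j)
    simp only [hε]
    rw [this]; ring
  have hinner0 : Tendsto (fun j => (inner ℝ (u j) (v j) : ℝ)) atTop (𝓝 0) := by
    refine squeeze_zero_norm' (a := fun j => ‖u j‖ * (1 + η * R)) ?_ ?_
    · filter_upwards [hvM] with j hj
      calc ‖(inner ℝ (u j) (v j) : ℝ)‖ ≤ ‖u j‖ * ‖v j‖ := norm_inner_le_norm _ _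
      _ ≤ ‖u j‖ * (1 + η * R) := mul_le_mul_of_nonneg_left hj (norm_nonneg _)
    · simpa using hu0.mul_const (1 + η * R)
  have hε0 : Tendsto ε atTop (𝓝 0) := by
    have h1 : Tendsto (fun j => ‖u j‖ ^ 2 + 2 * (inner ℝ (u j) (v j) : ℝ)) atTop (𝓝 0) := by
      have := (hu0.pow 2).add (hinner0.const_mul 2)
      simpa using this
    have := h1.const_mul (1 / (2 * η))
    simp only [mul_zero] at this
    exact Tendsto.congr (fun j => (hεident j).symm) this
  -- key inequality : g (x (t j)) ≤ g xstar + ε j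
  have hkey : ∀ j, g (x (t j)) ≤ g xstar + (ε j : EReal) := by
    intro j
    have h := hprox j xstar
    have hrw : xstar - x (t j - 1) + η • w (t j - 1) = u j + v j := by
      simp only [hu, hv]; abel
    rw [hrw] at h
    set a : ℝ := (1 / (2 * η)) * ‖v j‖ ^ 2 with ha
    have hb : ((1 / (2 * η)) * ‖u j + v j‖ ^ 2 : ℝ) = ε j + a := by simp [hε, ha]
    have h' : g (x (t j)) + (a : EReal) ≤ (g xstar + (ε j : EReal)) + (a : EReal) := by
      calc g (x (t j)) + (a : EReal) ≤ g xstar + ((ε j + a : ℝ) : EReal) := by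
            rw [← hb]; exact h
      _ = (g xstar + (ε j : EReal)) + (a : EReal) := by
            rw [EReal.coe_add, add_assoc]
    exact (EReal.addLECancellable_coe a).add_le_add_iff_right.1 h'
  -- limsup ≤ g xstar
  have hlimsup : limsup (fun j => g (x (t j))) atTop ≤ g xstar := by
    rw [limsup_le_iff]
    intro y hy
    have hytop : g xstar ≠ ⊤ := fun h => by simp [h] at hy
    obtain ⟨c, hc⟩ : ∃ c : ℝ, g xstar = (c : EReal) := by
      lift g xstar to ℝ using ⟨hytop, hg_bot xstar⟩ with c
      exact ⟨c, rfl⟩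
    rw [hc] at hy
    obtain ⟨r, hr1, hr2⟩ := EReal.exists_between_coe_real hy
    have hrc : 0 < r - c := by
      have : c < r := by exact_mod_cast hr1
      linarith
    filter_upwards [hε0.eventually (gt_mem_nhds hrc)] with j hj
    calc g (x (t j)) ≤ (c : EReal) + (ε j : EReal) := hc ▸ hkey j
    _ < (c : EReal) + ((r - c : ℝ) : EReal) := by
        exact_mod_cast EReal.coe_lt_coe_iff.2 (by linarith)
    _ = (r : EReal) := by norm_cast; ring_nf
    _ < y := hr2
  -- g xstar ≤ liminf
  have hliminf : g xstar ≤ liminf (fun j => g (x (t j))) atTop := by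
    rw [le_liminf_iff]
    intro y hy
    exact hconv.eventually (hg_lsc xstar y hy)
  have hg_tendsto : Tendsto (fun j => g (x (t j))) atTop (𝓝 (g xstar)) :=
    tendsto_of_le_liminf_of_limsup_le hliminf hlimsup
  refine ⟨hg_tendsto, ?_⟩
  have hΦ_tendsto : Tendsto (fun j => (Φ (x (t j)) : EReal)) atTop (𝓝 ((Φ xstar : EReal))) :=
    (continuous_coe_real_ereal.tendsto _).comp ((hΦ.tendsto _).comp hconv)
  have hcont : ContinuousAt (fun p : EReal × EReal => p.1 + p.2) ((Φ xstar : EReal), g xstar) :=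
    EReal.continuousAt_add (Or.inr (hg_bot xstar)) (Or.inl (EReal.coe_ne_bot _))
  exact hcont.tendsto.comp (hΦ_tendsto.prodMk_nhds hg_tendsto)
end
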